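/- arXiv:1811.02498 — 3 statements merged into one kernel-verified Lean document; each statement's English description precedes it below -/
import Mathlib

section
/- There is a constant C > 0, depending only on r, with the following property. Let Y > 2, 0 < δ < 10^{−3}, and for each prime p ≤ Y let ω_p ∈ [−2, 2] and λ_p ∈ ℝ with |λ_p − ω_p| ≤ δ. Then max_{s∈K} | ∑_{p ≤ Y, p prime} ( Log(1 − λ_p p^{−s} + p^{−2s}) − Log(1 − ω_p p^{−s} + p^{−2s}) ) | ≤ C δ √Y. -/
open scoped Classical

lemma aux_roots (μ : ℝ) (hμ : |μ| ≤ 2 + 1/1000) :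
    ∃ a b : ℂ, a + b = (μ : ℂ) ∧ a * b = 1 ∧
      (0.96 : ℝ) ≤ ‖a‖ ∧ (0.96 : ℝ) ≤ ‖b‖ := by
  have hμ2 : μ^2 ≤ (2 + 1/1000)^2 := by
    have h := abs_le.mp hμ
    nlinarith [h.1, h.2]
  rcases le_or_gt (μ^2/4 - 1) 0 with hD | hD
  · -- complex conjugate roots on the unit circle
    set t := Real.sqrt (1 - μ^2/4) with ht
    have ht2 : t^2 = 1 - μ^2/4 := Real.sq_sqrt (by linarith)
    refine ⟨(μ/2 : ℝ) + (t:ℂ) * Complex.I, (μ/2 : ℝ) - (t:ℂ) * Complex.I, by push_cast; ring, ?_, ?_, ?_⟩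
    · have : ((μ/2 : ℝ) + (t:ℂ) * Complex.I) * ((μ/2 : ℝ) - (t:ℂ) * Complex.I)
          = (((μ/2)^2 + t^2 : ℝ) : ℂ) := by
        push_cast
        ring_nf
        rw [Complex.I_sq]
        ring
      rw [this, ht2]
      norm_num
      push_cast
      ring
    · have h1 : ‖(μ/2 : ℝ) + (t:ℂ) * Complex.I‖ = 1 := by
        rw [Complex.norm_def]
        have : Complex.normSq ((μ/2 : ℝ) + (t:ℂ) * Complex.I) = 1 := by
          simp [Complex.normSq_apply]
          nlinarith [ht2]
        rw [this, Real.sqrt_one]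
      rw [h1]; norm_num
    · have h1 : ‖(μ/2 : ℝ) - (t:ℂ) * Complex.I‖ = 1 := by
        rw [Complex.norm_def]
        have : Complex.normSq ((μ/2 : ℝ) - (t:ℂ) * Complex.I) = 1 := by
          simp [Complex.normSq_apply]
          nlinarith [ht2]
        rw [this, Real.sqrt_one]
      rw [h1]; norm_num
  · -- real roots
    set d := Real.sqrt (μ^2/4 - 1) with hd
    have hd2 : d^2 = μ^2/4 - 1 := Real.sq_sqrt (by linarith)
    have hdle : d ≤ 0.0317 := by
      have h1 : μ^2/4 - 1 ≤ (0.0317:ℝ)^2 := by nlinarith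
      calc d ≤ Real.sqrt ((0.0317:ℝ)^2) := Real.sqrt_le_sqrt h1
        _ = 0.0317 := Real.sqrt_sq (by norm_num)
    have hdnn : 0 ≤ d := Real.sqrt_nonneg _
    have habs := abs_le.mp hμ
    have hprod : (μ/2 + d) * (μ/2 - d) = 1 := by nlinarith
    have haabs : |μ/2 + d| ≤ 1.04 := by
      rw [abs_le]; constructor <;> nlinarith
    have hbabs : |μ/2 - d| ≤ 1.04 := by
      rw [abs_le]; constructor <;> nlinarith
    have hmul : |μ/2 + d| * |μ/2 - d| = 1 := by
      rw [← abs_mul, hprod]; norm_num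
    have ha' : (0.96:ℝ) ≤ |μ/2 + d| := by nlinarith [abs_nonneg (μ/2 + d), abs_nonneg (μ/2 - d)]
    have hb' : (0.96:ℝ) ≤ |μ/2 - d| := by nlinarith [abs_nonneg (μ/2 + d), abs_nonneg (μ/2 - d)]
    refine ⟨((μ/2 + d : ℝ) : ℂ), ((μ/2 - d : ℝ) : ℂ), by push_cast; ring, ?_, ?_, ?_⟩
    · rw [← Complex.ofReal_mul, hprod]; norm_num
    · rw [Complex.norm_real]; exact ha'
    · rw [Complex.norm_real]; exact hb'

lemma aux_lower (μ : ℝ) (hμ : |μ| ≤ 2 + 1/1000) (x : ℂ) (hx : ‖x‖ ≤ 0.71) :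
    (1/16 : ℝ) ≤ ‖1 - (μ:ℂ) * x + x ^ 2‖ := by
  obtain ⟨a, b, hsum, hprod, ha, hb⟩ := aux_roots μ hμ
  have hfac : 1 - (μ:ℂ) * x + x ^ 2 = (x - a) * (x - b) := by
    rw [← hsum, ← hprod]; ring
  rw [hfac, norm_mul]
  have h1 : (0.25:ℝ) ≤ ‖x - a‖ := by
    have h := norm_sub_norm_le a x
    rw [norm_sub_rev] at h
    linarith
  have h2 : (0.25:ℝ) ≤ ‖x - b‖ := by
    have h := norm_sub_norm_le b x
    rw [norm_sub_rev] at h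
    linarith
  nlinarith [norm_nonneg (x - a), norm_nonneg (x - b)]

lemma aux_slit (μ : ℝ) (hμ : |μ| ≤ 2 + 1/1000) (x : ℂ) (hx : ‖x‖ ≤ 0.71) :
    1 - (μ:ℂ) * x + x ^ 2 ∈ Complex.slitPlane := by
  have huv : x.re^2 + x.im^2 ≤ 0.71^2 := by
    have h1 := Complex.sq_norm x
    rw [Complex.normSq_apply] at h1
    nlinarith [norm_nonneg x]
  have hμ2 : μ^2 ≤ (2 + 1/1000)^2 := by
    have h := abs_le.mp hμ
    nlinarith [h.1, h.2]
  have hre : (1 - (μ:ℂ) * x + x ^ 2).re = 1 - μ * x.re + x.re^2 - x.im^2 := by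
    simp [Complex.add_re, Complex.sub_re, Complex.mul_re, pow_two]
    ring
  have him : (1 - (μ:ℂ) * x + x ^ 2).im = x.im * (2*x.re - μ) := by
    simp [Complex.add_im, Complex.sub_im, Complex.mul_im, pow_two]
    ring
  rw [Complex.mem_slitPlane_iff]
  by_cases hv : (1 - (μ:ℂ) * x + x ^ 2).im = 0
  · left
    rw [hre]
    rw [him] at hv
    rcases mul_eq_zero.mp hv with h | h
    · rw [h]
      have key : 0 < 1 - μ * x.re + x.re^2 := by
        by_contra hc
        push_neg at hc
        have h1 : 1 + x.re^2 ≤ μ * x.re := by linarith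
        have h2 : x.re^2 ≤ 0.5041 := by nlinarith [sq_nonneg x.im]
        nlinarith [sq_nonneg (1 + x.re^2), sq_nonneg (μ * x.re), sq_nonneg x.re,
          mul_self_nonneg (μ*x.re - 1 - x.re^2)]
      nlinarith [sq_nonneg x.im]
    · have hμeq : μ = 2 * x.re := by linarith
      rw [hμeq]
      nlinarith
  · right; exact hv

lemma aux_log_diff (x : ℂ) (hx : ‖x‖ ≤ 0.71) (ω lam δ : ℝ)
    (hω : |ω| ≤ 2) (hδ : 0 < δ) (hδ' : δ ≤ 1/1000) (hl : |lam - ω| ≤ δ) :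
    ‖Complex.log (1 - (lam:ℂ) * x + x ^ 2) - Complex.log (1 - (ω:ℂ) * x + x ^ 2)‖
      ≤ 16 * δ * ‖x‖ := by
  have hbound : ∀ t ∈ Set.uIcc ω lam, |t| ≤ 2 + 1/1000 := by
    intro t ht
    rw [Set.mem_uIcc] at ht
    rw [abs_le] at hω hl ⊢
    rcases ht with ⟨h1, h2⟩ | ⟨h1, h2⟩ <;> constructor <;> linarith
  set f : ℝ → ℂ := fun u : ℝ => Complex.log (1 - (u:ℂ) * x + x ^ 2) with hf
  have hderiv : ∀ t ∈ Set.uIcc ω lam,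
      HasDerivWithinAt f ((-x) / (1 - (t:ℂ) * x + x ^ 2)) (Set.uIcc ω lam) t := by
    intro t ht
    have h0 : HasDerivAt (fun u : ℝ => (u : ℂ)) 1 t := by
      simpa using (hasDerivAt_id t).ofReal_comp
    have h1 : HasDerivAt (fun u : ℝ => 1 - (u : ℂ) * x + x ^ 2) (-x) t := by
      have := ((h0.mul_const x).const_sub 1).add_const (x ^ 2)
      simpa using this
    exact (h1.clog_real (aux_slit t (hbound t ht) x hx)).hasDerivWithinAt
  have hC : ∀ t ∈ Set.uIcc ω lam,
      ‖(-x) / (1 - (t:ℂ) * x + x ^ 2)‖ ≤ 16 * ‖x‖ := by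
    intro t ht
    rw [norm_div, norm_neg]
    have hlow := aux_lower t (hbound t ht) x hx
    have hpos : (0:ℝ) < ‖1 - (t:ℂ) * x + x ^ 2‖ := by linarith
    rw [div_le_iff₀ hpos]
    nlinarith [norm_nonneg x]
  have := (convex_uIcc ω lam).norm_image_sub_le_of_norm_hasDerivWithin_le hderiv hC
    (Set.left_mem_uIcc) (Set.right_mem_uIcc)
  rw [hf] at this
  calc ‖Complex.log (1 - (lam:ℂ) * x + x ^ 2) - Complex.log (1 - (ω:ℂ) * x + x ^ 2)‖
      ≤ 16 * ‖x‖ * ‖lam - ω‖ := this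
    _ ≤ 16 * ‖x‖ * δ := by
        have : ‖lam - ω‖ = |lam - ω| := rfl
        rw [this]
        nlinarith [norm_nonneg x]
    _ = 16 * δ * ‖x‖ := by ring

lemma aux_sqrt_sum (N : ℕ) :
    ∑ n ∈ Finset.range (N + 1), ((n:ℝ) ^ (-(1/2) : ℝ)) ≤ 2 * Real.sqrt N := by
  induction N with
  | zero =>
    simp [Real.zero_rpow (by norm_num : (-(1/2) : ℝ) ≠ 0)]
  | succ n ih =>
    rw [Finset.sum_range_succ]
    have hb : (0:ℝ) < Real.sqrt ((n:ℝ) + 1) := Real.sqrt_pos.mpr (by positivity)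
    have h1 : ((n+1 : ℕ):ℝ) ^ (-(1/2):ℝ) = (Real.sqrt ((n:ℝ)+1))⁻¹ := by
      push_cast
      rw [Real.rpow_neg (by positivity), Real.sqrt_eq_rpow]
    have step : (Real.sqrt ((n:ℝ)+1))⁻¹ ≤ 2*Real.sqrt ((n:ℝ)+1) - 2*Real.sqrt n := by
      rw [inv_eq_one_div, div_le_iff₀ hb]
      nlinarith [Real.sq_sqrt (show (0:ℝ) ≤ n by positivity),
        Real.sq_sqrt (show (0:ℝ) ≤ (n:ℝ)+1 by positivity),
        Real.sqrt_nonneg (n:ℝ), Real.sqrt_nonneg ((n:ℝ)+1),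
        sq_nonneg (Real.sqrt (n:ℝ) - Real.sqrt ((n:ℝ)+1))]
    have hcast : Real.sqrt ((n+1:ℕ):ℝ) = Real.sqrt ((n:ℝ)+1) := by push_cast; ring_nf
    rw [h1, hcast]
    linarith

/-- There is a constant `C > 0`, depending only on `r`, such that for
all `Y > 2`, `0 < δ < 10⁻³`, and reals `ω p ∈ [-2,2]`, `lam p` with `|lam p - ω p| ≤ δ`
for the primes `p ≤ Y`, one has
`max_{s ∈ K} |∑_{p ≤ Y} (Log (1 - lam p · p^{-s} + p^{-2s}) - Log (1 - ω p · p^{-s} + p^{-2s}))|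
  ≤ C δ √Y`, where `K` is the closed disc `{|s - 3/4| ≤ r}` with `0 < r < 1/4`. -/
theorem stmt3 (r : ℝ) (hr0 : 0 < r) (hr : r < 1 / 4) :
    ∃ C : ℝ, 0 < C ∧
      ∀ Y : ℝ, 2 < Y → ∀ δ : ℝ, 0 < δ → δ < 1 / 1000 →
        ∀ ω lam : ℕ → ℝ,
          (∀ p : ℕ, p.Prime → (p : ℝ) ≤ Y → ω p ∈ Set.Icc (-2 : ℝ) 2 ∧ |lam p - ω p| ≤ δ) →
          ∀ s ∈ Metric.closedBall (3 / 4 : ℂ) r,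
            ‖(∑ p ∈ (Finset.range (⌊Y⌋₊ + 1)).filter
                (fun p : ℕ => p.Prime ∧ (p : ℝ) ≤ Y),
              (Complex.log (1 - (lam p : ℂ) * (p : ℂ) ^ (-s) + (p : ℂ) ^ (-(2 * s)))
                - Complex.log (1 - (ω p : ℂ) * (p : ℂ) ^ (-s) + (p : ℂ) ^ (-(2 * s)))))‖
            ≤ C * δ * Real.sqrt Y := by
  refine ⟨32, by norm_num, ?_⟩
  intro Y hY δ hδ hδ' ω lam hωlam s hs
  -- Re s ≥ 1/2
  have hsre : (1/2 : ℝ) ≤ s.re := by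
    rw [Metric.mem_closedBall, Complex.dist_eq] at hs
    have h1 : |(s - 3/4).re| ≤ ‖s - 3/4‖ := Complex.abs_re_le_norm _
    have h2 : (s - (3/4 : ℂ)).re = s.re - 3/4 := by simp
    rw [h2] at h1
    have := abs_le.mp (h1.trans hs)
    linarith [this.1]
  set F := (Finset.range (⌊Y⌋₊ + 1)).filter (fun p : ℕ => p.Prime ∧ (p : ℝ) ≤ Y) with hF
  have key : ∀ p ∈ F,
      ‖Complex.log (1 - (lam p : ℂ) * (p : ℂ) ^ (-s) + (p : ℂ) ^ (-(2 * s)))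
        - Complex.log (1 - (ω p : ℂ) * (p : ℂ) ^ (-s) + (p : ℂ) ^ (-(2 * s)))‖
      ≤ 16 * δ * ((p:ℝ) ^ (-(1/2) : ℝ)) := by
    intro p hp
    rw [hF, Finset.mem_filter] at hp
    obtain ⟨-, hpp, hpY⟩ := hp
    have hp2 : (2:ℝ) ≤ (p:ℝ) := by exact_mod_cast hpp.two_le
    have hppos : (0:ℝ) < (p:ℝ) := by linarith
    have hpne : ((p:ℕ):ℂ) ≠ 0 := by
      simp only [ne_eq, Nat.cast_eq_zero]
      exact hpp.pos.ne'
    set x : ℂ := (p : ℂ) ^ (-s) with hxdef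
    have hxabs : ‖x‖ = (p:ℝ) ^ (-s.re) := by
      rw [hxdef, show ((p:ℕ):ℂ) = (((p:ℕ):ℝ):ℂ) by push_cast; rfl,
        Complex.norm_cpow_eq_rpow_re_of_pos hppos]
      simp
    have hx12 : ‖x‖ ≤ (p:ℝ) ^ (-(1/2) : ℝ) := by
      rw [hxabs]
      exact Real.rpow_le_rpow_of_exponent_le (by linarith) (by linarith)
    have hx071 : ‖x‖ ≤ 0.71 := by
      refine hx12.trans ?_
      have e1 : (p:ℝ) ^ (-(1/2) : ℝ) = ((p:ℝ) ^ ((1/2) : ℝ))⁻¹ := by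
        rw [Real.rpow_neg (le_of_lt hppos)]
      rw [e1]
      have e2 : Real.sqrt 2 ≤ (p:ℝ) ^ ((1/2) : ℝ) := by
        rw [Real.sqrt_eq_rpow]
        exact Real.rpow_le_rpow (by norm_num) hp2 (by norm_num)
      have e3 : (1.41:ℝ) ≤ Real.sqrt 2 := by
        nlinarith [Real.sq_sqrt (show (0:ℝ) ≤ 2 by norm_num), Real.sqrt_nonneg 2]
      have e4 : (0:ℝ) < (p:ℝ) ^ ((1/2) : ℝ) := by positivity
      rw [inv_le_iff_one_le_mul₀ e4] -- may need rename
      nlinarith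
    have hx2 : (p : ℂ) ^ (-(2 * s)) = x ^ 2 := by
      rw [hxdef, show -(2*s) = -s + -s by ring, Complex.cpow_add _ _ hpne, sq]
    obtain ⟨hω2, hlam⟩ := hωlam p hpp hpY
    rw [Set.mem_Icc] at hω2
    have hωabs : |ω p| ≤ 2 := abs_le.mpr hω2
    rw [hx2]
    calc ‖Complex.log (1 - (lam p : ℂ) * x + x ^ 2)
          - Complex.log (1 - (ω p : ℂ) * x + x ^ 2)‖
        ≤ 16 * δ * ‖x‖ :=
          aux_log_diff x hx071 (ω p) (lam p) δ hωabs hδ (le_of_lt hδ') hlam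
      _ ≤ 16 * δ * ((p:ℝ) ^ (-(1/2) : ℝ)) := by nlinarith
  have hnn : ∀ n ∈ Finset.range (⌊Y⌋₊ + 1), (0:ℝ) ≤ 16 * δ * ((n:ℝ) ^ (-(1/2) : ℝ)) := by
    intro n _
    have : (0:ℝ) ≤ (n:ℝ) ^ (-(1/2) : ℝ) := Real.rpow_nonneg (Nat.cast_nonneg n) _
    nlinarith
  have hYnn : (0:ℝ) ≤ Y := by linarith
  calc ‖∑ p ∈ F,
        (Complex.log (1 - (lam p : ℂ) * (p : ℂ) ^ (-s) + (p : ℂ) ^ (-(2 * s)))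
          - Complex.log (1 - (ω p : ℂ) * (p : ℂ) ^ (-s) + (p : ℂ) ^ (-(2 * s))))‖
      ≤ ∑ p ∈ F, ‖
        (Complex.log (1 - (lam p : ℂ) * (p : ℂ) ^ (-s) + (p : ℂ) ^ (-(2 * s)))
          - Complex.log (1 - (ω p : ℂ) * (p : ℂ) ^ (-s) + (p : ℂ) ^ (-(2 * s))))‖ :=
        norm_sum_le _ _
    _ ≤ ∑ p ∈ F, 16 * δ * ((p:ℝ) ^ (-(1/2) : ℝ)) := Finset.sum_le_sum key
    _ ≤ ∑ n ∈ Finset.range (⌊Y⌋₊ + 1), 16 * δ * ((n:ℝ) ^ (-(1/2) : ℝ)) :=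
        Finset.sum_le_sum_of_subset_of_nonneg (Finset.filter_subset _ _)
          (fun n hn _ => hnn n hn)
    _ = 16 * δ * ∑ n ∈ Finset.range (⌊Y⌋₊ + 1), ((n:ℝ) ^ (-(1/2) : ℝ)) := by
        rw [Finset.mul_sum]
    _ ≤ 16 * δ * (2 * Real.sqrt (⌊Y⌋₊ : ℝ)) := by
        have := aux_sqrt_sum ⌊Y⌋₊
        nlinarith
    _ ≤ 32 * δ * Real.sqrt Y := by
        have h1 : Real.sqrt (⌊Y⌋₊ : ℝ) ≤ Real.sqrt Y :=
          Real.sqrt_le_sqrt (Nat.floor_le hYnn)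
        nlinarith
end

section
/- Let X = ∏_p [−n(p), n(p)] and μ = ⊗_p μ_p, and let (x_j)_{j≥1} be a sequence in X that is equidistributed with respect to μ, i.e. for every continuous φ : X → ℝ, lim_{N→∞} (1/N) ∑_{j=1}^{N} φ(x_j) = ∫_X φ dμ. Fix r ∈ (0, 1/4), let K be the closed disc {s ∈ ℂ : |s − 3/4| ≤ r}, and fix reals Y and X₁ with 2^{1/(1/4−r)} < Y < X₁. For x ∈ X define F(x) = max_{s∈K} | ∑_{Y < p ≤ X₁, p prime} Log(1 − x(p) p^{−s} + p^{−2s}) |; F is a well-defined continuous function on X. Then for every δ > 0 and every choice of ω_p ∈ [−2, 2] for primes p ≤ Y, limsup_{N→∞} (1/N) ∑_{j ≤ N, |x_j(p) − ω_p| ≤ δ for all primes p ≤ Y} F(x_j) ≤ ( ∏_{p ≤ Y} μ_p([ω_p − δ, ω_p + δ]) ) · ∫_X F dμ. -/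
open scoped Classical
open MeasureTheory Filter

/-- `n(p) = p^{1/2} + p^{-1/2}`. -/
noncomputable def np (p : ℕ) : ℝ := (p : ℝ) ^ ((1 : ℝ) / 2) + (p : ℝ) ^ (-(1 : ℝ) / 2)

/-- The density of the measure `μ_p`: it equals
`(1/(2π)) (1+p) √(4-x²)/(n(p)² - x²)` for `|x| ≤ 2` and vanishes outside `[-2,2]`. -/
noncomputable def dens (p : ℕ) (x : ℝ) : ℝ :=
  1 / (2 * Real.pi) * (1 + (p : ℝ)) * Real.sqrt (4 - x ^ 2) / (np p ^ 2 - x ^ 2)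

/-- The measure `μ_p` on `ℝ` (supported in `[-2,2] ⊆ [-n(p), n(p)]`). -/
noncomputable def μp (p : ℕ) : Measure ℝ := volume.withDensity fun x => ENNReal.ofReal (dens p x)

/-- `F x = max_{s ∈ K} |∑_{Y < p ≤ X₁} Log (1 - x(p) p^{-s} + p^{-2s})|`, where
`K` is the closed disc `{|s - 3/4| ≤ r}`. -/
noncomputable def Ffun (r Y X₁ : ℝ)
    (x : (p : Nat.Primes) → Set.Icc (-(np (p : ℕ))) (np (p : ℕ))) : ℝ :=
  sSup ((fun s : ℂ => ‖
      (∑ p ∈ (Finset.range (⌊X₁⌋₊ + 1)).filter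
          (fun p : ℕ => p.Prime ∧ Y < (p : ℝ) ∧ (p : ℝ) ≤ X₁),
        Complex.log (1 - (if hp : p.Prime then ((x ⟨p, hp⟩ : ℝ) : ℂ) else 0) * (p : ℂ) ^ (-s)
          + (p : ℂ) ^ (-(2 * s))))‖) '' Metric.closedBall (3 / 4 : ℂ) r)


open Topology

section Stmt4Aux

abbrev XSp : Type := (p : Nat.Primes) → Set.Icc (-(np (p : ℕ))) (np (p : ℕ))

lemma np_nonneg (p : ℕ) : 0 ≤ np p :=
  add_nonneg (Real.rpow_nonneg (Nat.cast_nonneg p) _) (Real.rpow_nonneg (Nat.cast_nonneg p) _)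

lemma abs_coord_le (x : XSp) (q : Nat.Primes) : |(x q : ℝ)| ≤ np (q : ℕ) :=
  abs_le.2 ⟨(x q).2.1, (x q).2.2⟩

instance instCS : CompactSpace XSp := by infer_instance

lemma re_pos {r Y : ℝ} (hr0 : 0 < r) (hr : r < 1/4) (hY : (2:ℝ) ^ ((1:ℝ)/(1/4 - r)) < Y)
    {p : ℕ} (hp : p.Prime) (hYp : Y < (p:ℝ)) {s : ℂ} (hs : s ∈ Metric.closedBall (3/4 : ℂ) r)
    {l : ℝ} (hl : |l| ≤ np p) :
    0 < (1 - (l : ℂ) * (p:ℂ) ^ (-s) + (p:ℂ) ^ (-(2*s))).re := by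
  have hc : 0 < 1/4 - r := by linarith
  have hp1 : (1:ℝ) ≤ (p:ℝ) := by exact_mod_cast hp.one_lt.le
  have hp0 : (0:ℝ) < (p:ℝ) := lt_of_lt_of_le one_pos hp1
  have h2Y : (2:ℝ) ^ ((1:ℝ)/(1/4-r)) < (p:ℝ) := hY.trans hYp
  have hpc : (2:ℝ) < (p:ℝ) ^ (1/4 - r) := by
    have h := Real.rpow_lt_rpow (by positivity) h2Y hc
    rwa [← Real.rpow_mul (by norm_num : (0:ℝ) ≤ 2), one_div,
      inv_mul_cancel₀ (ne_of_gt hc), Real.rpow_one] at h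
  have hinv : (p:ℝ) ^ (-(1/4 - r)) < 1/2 := by
    rw [Real.rpow_neg hp0.le]
    have hpos : (0:ℝ) < (p:ℝ) ^ (1/4 - r) := Real.rpow_pos_of_pos hp0 _
    calc ((p:ℝ) ^ (1/4 - r))⁻¹ < 2⁻¹ := by
          rw [inv_lt_inv₀ hpos (by norm_num)]; exact hpc
      _ = 1/2 := by norm_num
  have hp16 : (16:ℝ) < (p:ℝ) := by
    have h14 : (p:ℝ) ^ (1/4 - r) ≤ (p:ℝ) ^ ((1:ℝ)/4) :=
      Real.rpow_le_rpow_of_exponent_le hp1 (by linarith)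
    have h4 : (2:ℝ) < (p:ℝ) ^ ((1:ℝ)/4) := hpc.trans_le h14
    have h := Real.rpow_lt_rpow (by norm_num) h4 (by norm_num : (0:ℝ) < 4)
    rw [← Real.rpow_mul (Nat.cast_nonneg p)] at h
    norm_num at h
    exact_mod_cast h
  have hpinv : (p:ℝ)⁻¹ < 1/16 := by
    rw [show (1:ℝ)/16 = 16⁻¹ by norm_num, inv_lt_inv₀ hp0 (by norm_num)]
    exact hp16
  -- real part of s
  have hσ : |s.re - 3/4| ≤ r := by
    have hd : ‖s - 3/4‖ ≤ r := by
      rwa [Metric.mem_closedBall, Complex.dist_eq] at hs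
    have h1 : |(s - 3/4).re| ≤ ‖s - 3/4‖ := Complex.abs_re_le_norm _
    have h2 : (s - 3/4).re = s.re - 3/4 := by simp [Complex.sub_re]
    rw [h2] at h1; linarith
  have hσ1 : 3/4 - r ≤ s.re := by have := abs_le.1 hσ; linarith [this.1]
  have hσ2 : s.re ≤ 3/4 + r := by have := abs_le.1 hσ; linarith [(abs_le.1 hσ).2]
  have hcast : ((p:ℝ):ℂ) = ((p:ℕ):ℂ) := by push_cast; rfl
  have habs1 : ‖(l:ℂ) * (p:ℂ) ^ (-s)‖ ≤ (p:ℝ) ^ (-(1/4 - r)) + (p:ℝ)⁻¹ := by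
    rw [norm_mul, Complex.norm_real, Real.norm_eq_abs]
    have hcp : ‖(p:ℂ) ^ (-s)‖ = (p:ℝ) ^ (-s.re) := by
      rw [← hcast, Complex.norm_cpow_eq_rpow_re_of_pos hp0, Complex.neg_re]
    rw [hcp]
    have hle1 : |l| * (p:ℝ) ^ (-s.re) ≤ np p * (p:ℝ) ^ (-s.re) := by
      gcongr
    refine hle1.trans ?_
    rw [np, add_mul, ← Real.rpow_add hp0, ← Real.rpow_add hp0]
    have e1 : (p:ℝ) ^ ((1:ℝ)/2 + -s.re) ≤ (p:ℝ) ^ (-(1/4 - r)) :=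
      Real.rpow_le_rpow_of_exponent_le hp1 (by linarith)
    have e2 : (p:ℝ) ^ (-(1:ℝ)/2 + -s.re) ≤ (p:ℝ) ^ (-1:ℝ) :=
      Real.rpow_le_rpow_of_exponent_le hp1 (by linarith)
    rw [Real.rpow_neg_one] at e2
    linarith
  have habs2 : ‖(p:ℂ) ^ (-(2*s))‖ ≤ (p:ℝ)⁻¹ := by
    rw [← hcast, Complex.norm_cpow_eq_rpow_re_of_pos hp0]
    have h1 : (-(2*s)).re = -(2*s.re) := by simp [Complex.mul_re]
    rw [h1]
    have e : (p:ℝ) ^ (-(2*s.re)) ≤ (p:ℝ) ^ (-1:ℝ) :=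
      Real.rpow_le_rpow_of_exponent_le hp1 (by linarith)
    rwa [Real.rpow_neg_one] at e
  have hre : (1 - (l:ℂ) * (p:ℂ) ^ (-s) + (p:ℂ) ^ (-(2*s))).re
      = 1 - ((l:ℂ) * (p:ℂ) ^ (-s)).re + ((p:ℂ) ^ (-(2*s))).re := by simp
  rw [hre]
  have e1 : ((l:ℂ) * (p:ℂ) ^ (-s)).re ≤ (p:ℝ) ^ (-(1/4 - r)) + (p:ℝ)⁻¹ :=
    (Complex.re_le_norm _).trans habs1
  have e2 : -((p:ℝ)⁻¹) ≤ ((p:ℂ) ^ (-(2*s))).re := by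
    have h := Complex.abs_re_le_norm ((p:ℂ) ^ (-(2*s)))
    have := neg_abs_le (((p:ℂ) ^ (-(2*s))).re)
    linarith
  linarith


set_option maxHeartbeats 1000000 in
lemma sum_contAt (r Y X₁ : ℝ) (hr0 : 0 < r) (hr : r < 1/4)
    (hY : (2:ℝ) ^ ((1:ℝ)/(1/4 - r)) < Y)
    {x0 : XSp} {s0 : ℂ} (hs0 : s0 ∈ Metric.closedBall (3/4 : ℂ) r) :
    ContinuousAt (fun q : XSp × ℂ => ∑ p ∈ (Finset.range (⌊X₁⌋₊ + 1)).filter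
          (fun p : ℕ => p.Prime ∧ Y < (p : ℝ) ∧ (p : ℝ) ≤ X₁),
        Complex.log (1 - (if hp : p.Prime then ((q.1 ⟨p, hp⟩ : ℝ) : ℂ) else 0) * (p : ℂ) ^ (-q.2)
          + (p : ℂ) ^ (-(2 * q.2)))) (x0, s0) := by
  refine tendsto_finset_sum _ fun p hpmem => ?_
  rw [Finset.mem_filter] at hpmem
  obtain ⟨-, hpp, hYp, hX⟩ := hpmem
  have hpne : (p:ℂ) ≠ 0 := Nat.cast_ne_zero.2 hpp.pos.ne'
  have hw : Continuous (fun q : XSp × ℂ =>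
      1 - (if h : p.Prime then ((q.1 ⟨p, h⟩ : ℝ) : ℂ) else 0) * (p : ℂ) ^ (-q.2)
        + (p : ℂ) ^ (-(2 * q.2))) := by
    apply Continuous.add
    · apply Continuous.sub continuous_const
      apply Continuous.mul
      · simp only [dif_pos hpp]
        exact Complex.continuous_ofReal.comp (continuous_subtype_val.comp
          ((continuous_apply _).comp continuous_fst))
      · exact Continuous.const_cpow (continuous_neg.comp continuous_snd) (Or.inl hpne)
    · exact Continuous.const_cpow (by fun_prop) (Or.inl hpne)
  apply ContinuousAt.clog hw.continuousAt
  simp only [dif_pos hpp]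
  exact Complex.mem_slitPlane_iff.2 (Or.inl
    (re_pos hr0 hr hY hpp hYp hs0 (abs_coord_le x0 ⟨p, hpp⟩)))

set_option maxHeartbeats 1000000 in
lemma Ffun_cont (r Y X₁ : ℝ) (hr0 : 0 < r) (hr : r < 1/4)
    (hY : (2:ℝ) ^ ((1:ℝ)/(1/4 - r)) < Y) :
    Continuous (Ffun r Y X₁) := by
  haveI : CompactSpace (Metric.closedBall (3/4 : ℂ) r) :=
    isCompact_iff_compactSpace.mp (isCompact_closedBall _ _)
  have key := IsCompact.continuous_sSup
    (f := fun (x : XSp) (s : Metric.closedBall (3/4 : ℂ) r) => ‖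
      (∑ p ∈ (Finset.range (⌊X₁⌋₊ + 1)).filter
          (fun p : ℕ => p.Prime ∧ Y < (p : ℝ) ∧ (p : ℝ) ≤ X₁),
        Complex.log (1 - (if hp : p.Prime then ((x ⟨p, hp⟩ : ℝ) : ℂ) else 0) * (p : ℂ) ^ (-(s:ℂ))
          + (p : ℂ) ^ (-(2 * (s:ℂ)))))‖)
    (K := (Set.univ : Set (Metric.closedBall (3/4 : ℂ) r))) isCompact_univ ?_
  · have heq : (Ffun r Y X₁) = fun x => sSup ((fun s : Metric.closedBall (3/4 : ℂ) r =>
        ‖∑ p ∈ (Finset.range (⌊X₁⌋₊ + 1)).filter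
          (fun p : ℕ => p.Prime ∧ Y < (p : ℝ) ∧ (p : ℝ) ≤ X₁),
        Complex.log (1 - (if hp : p.Prime then ((x ⟨p, hp⟩ : ℝ) : ℂ) else 0) * (p : ℂ) ^ (-(s:ℂ))
          + (p : ℂ) ^ (-(2 * (s:ℂ))))‖) '' Set.univ) := by
      funext x
      unfold Ffun
      congr 1
      ext v
      constructor
      · rintro ⟨s, hs, rfl⟩
        exact ⟨⟨s, hs⟩, Set.mem_univ _, rfl⟩
      · rintro ⟨s, -, rfl⟩
        exact ⟨(s:ℂ), s.2, rfl⟩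
    rw [heq]
    exact key
  · rw [continuous_iff_continuousAt]
    rintro ⟨x0, s0⟩
    have h := sum_contAt r Y X₁ hr0 hr hY (x0 := x0) (s0 := (s0:ℂ)) s0.2
    have hm : ContinuousAt (fun q : XSp × Metric.closedBall (3/4 : ℂ) r => (q.1, (q.2 : ℂ)))
        (x0, s0) :=
      (continuous_fst.prodMk (continuous_subtype_val.comp continuous_snd)).continuousAt
    have hc2 : ContinuousAt ((fun q : XSp × ℂ => ∑ p ∈ (Finset.range (⌊X₁⌋₊ + 1)).filter
          (fun p : ℕ => p.Prime ∧ Y < (p : ℝ) ∧ (p : ℝ) ≤ X₁),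
        Complex.log (1 - (if hp : p.Prime then ((q.1 ⟨p, hp⟩ : ℝ) : ℂ) else 0) * (p : ℂ) ^ (-q.2)
          + (p : ℂ) ^ (-(2 * q.2)))) ∘
        (fun q : XSp × Metric.closedBall (3/4 : ℂ) r => (q.1, (q.2 : ℂ)))) (x0, s0) :=
      ContinuousAt.comp h hm
    exact continuous_norm.continuousAt.comp hc2

lemma Ffun_nonneg (r Y X₁ : ℝ) (x : XSp) : 0 ≤ Ffun r Y X₁ x := by
  refine Real.sSup_nonneg fun y hy => ?_
  obtain ⟨s, hs, rfl⟩ := hy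
  exact norm_nonneg _

lemma Ffun_congr {r Y X₁ : ℝ} {x y : XSp}
    (h : ∀ (p : ℕ) (hp : p.Prime), Y < (p:ℝ) → (p:ℝ) ≤ X₁ → x ⟨p, hp⟩ = y ⟨p, hp⟩) :
    Ffun r Y X₁ x = Ffun r Y X₁ y := by
  unfold Ffun
  refine congrArg sSup (congrArg (fun f : ℂ → ℝ => f '' Metric.closedBall (3/4 : ℂ) r) ?_)
  funext s
  apply congrArg
  refine Finset.sum_congr rfl fun p hpmem => ?_
  rw [Finset.mem_filter] at hpmem
  obtain ⟨-, hpp, h1, h2⟩ := hpmem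
  simp only [dif_pos hpp, h p hpp h1 h2]

end Stmt4Aux

/-- Let `X = ∏_p [-n(p), n(p)]`, `μ = ⊗_p μ_p` the product probability
measure, and `(x j)` a sequence in `X` equidistributed with respect to `μ`. Fix
`r ∈ (0, 1/4)`, the disc `K = {|s - 3/4| ≤ r}` and reals `2^{1/(1/4-r)} < Y < X₁`. Then
`F x = max_{s ∈ K} |∑_{Y < p ≤ X₁} Log (1 - x(p) p^{-s} + p^{-2s})|` is a continuous
function on `X`, and for every `δ > 0` and `ω p ∈ [-2,2]` (primes `p ≤ Y`),
`limsup_N (1/N) ∑_{j ≤ N, |x j p - ω p| ≤ δ ∀ p ≤ Y} F (x j)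
  ≤ (∏_{p ≤ Y} μ_p [ω p - δ, ω p + δ]) · ∫ F dμ`. -/

theorem stmt4
    (μ : Measure ((p : Nat.Primes) → Set.Icc (-(np (p : ℕ))) (np (p : ℕ))))
    (hprob : IsProbabilityMeasure μ)
    (hcyl : ∀ (S : Finset Nat.Primes) (A : Nat.Primes → Set ℝ),
      (∀ p ∈ S, MeasurableSet (A p)) →
      μ {x | ∀ p ∈ S, (x p : ℝ) ∈ A p} = ∏ p ∈ S, μp (p : ℕ) (A p))
    (x : ℕ → (p : Nat.Primes) → Set.Icc (-(np (p : ℕ))) (np (p : ℕ)))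
    (hequi : ∀ φ : ((p : Nat.Primes) → Set.Icc (-(np (p : ℕ))) (np (p : ℕ))) → ℝ,
      Continuous φ →
      Tendsto (fun N : ℕ => (∑ j ∈ Finset.Icc 1 N, φ (x j)) / N) atTop (nhds (∫ y, φ y ∂μ)))
    (r : ℝ) (hr0 : 0 < r) (hr : r < 1 / 4)
    (Y X₁ : ℝ) (hY : (2 : ℝ) ^ ((1 : ℝ) / (1 / 4 - r)) < Y) (hYX : Y < X₁)
    (δ : ℝ) (hδ : 0 < δ)
    (ω : ℕ → ℝ) (hω : ∀ p : ℕ, p.Prime → (p : ℝ) ≤ Y → ω p ∈ Set.Icc (-2 : ℝ) 2) :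
    Continuous (Ffun r Y X₁) ∧
    limsup (fun N : ℕ =>
        (∑ j ∈ (Finset.Icc 1 N).filter (fun j => ∀ (p : ℕ) (hp : p.Prime),
            (p : ℝ) ≤ Y → |(x j ⟨p, hp⟩ : ℝ) - ω p| ≤ δ), Ffun r Y X₁ (x j)) / N) atTop
      ≤ (∏ p ∈ (Finset.range (⌊Y⌋₊ + 1)).filter (fun p : ℕ => p.Prime ∧ (p : ℝ) ≤ Y),
          (μp p (Set.Icc (ω p - δ) (ω p + δ))).toReal) * ∫ y, Ffun r Y X₁ y ∂μ := by
  have hcont : Continuous (Ffun r Y X₁) := Ffun_cont r Y X₁ hr0 hr hY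
  refine ⟨hcont, ?_⟩
  classical
  set F : XSp → ℝ := Ffun r Y X₁ with hF
  set PY : Finset ℕ := (Finset.range (⌊Y⌋₊ + 1)).filter (fun p : ℕ => p.Prime ∧ (p : ℝ) ≤ Y)
    with hPY
  set Pfin : Finset ℕ := (Finset.range (⌊X₁⌋₊ + 1)).filter
      (fun p : ℕ => p.Prime ∧ Y < (p:ℝ) ∧ (p:ℝ) ≤ X₁) with hPfin
  set S₁ : Finset Nat.Primes := PY.subtype (fun p => p.Prime) with hS₁
  set S₂ : Finset Nat.Primes := Pfin.subtype (fun p => p.Prime) with hS₂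
  set A : ℕ → ℝ := fun N =>
      (∑ j ∈ (Finset.Icc 1 N).filter (fun j => ∀ (p : ℕ) (hp : p.Prime),
          (p : ℝ) ≤ Y → |(x j ⟨p, hp⟩ : ℝ) - ω p| ≤ δ), F (x j)) / N with hA
  -- basic facts
  have hFnn : ∀ z : XSp, 0 ≤ F z := fun z => Ffun_nonneg r Y X₁ z
  have hAnn : ∀ N, 0 ≤ A N := fun N => div_nonneg
    (Finset.sum_nonneg fun j _ => hFnn _) (Nat.cast_nonneg N)
  have hdisj : Disjoint S₁ S₂ := by
    rw [Finset.disjoint_left]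
    intro q h1 h2
    replace h1 : (q:ℕ) ∈ PY := Finset.mem_subtype.mp h1
    rw [hPY, Finset.mem_filter] at h1
    replace h2 : (q:ℕ) ∈ Pfin := Finset.mem_subtype.mp h2
    rw [hPfin, Finset.mem_filter] at h2
    exact absurd h2.2.2.1 (not_lt.2 h1.2.2)
  have hμp_prob : ∀ q : Nat.Primes, IsProbabilityMeasure (μp (q : ℕ)) := by
    intro q
    constructor
    have h := hcyl {q} (fun _ => Set.univ) (fun _ _ => MeasurableSet.univ)
    rw [Finset.prod_singleton] at h
    rw [← h]
    have : {z : XSp | ∀ p ∈ ({q} : Finset Nat.Primes), (z p : ℝ) ∈ (Set.univ : Set ℝ)}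
        = Set.univ := by
      ext z; simp
    rw [this]
    exact hprob.measure_univ
  have hev_meas : ∀ q : Nat.Primes, Measurable (fun z : XSp => (z q : ℝ)) :=
    fun q => measurable_subtype_coe.comp (measurable_pi_apply q)
  -- independence of coordinates
  have hiid : ProbabilityTheory.iIndepFun
      (fun q (z : XSp) => (z q : ℝ)) μ := by
    rw [ProbabilityTheory.iIndepFun_iff_measure_inter_preimage_eq_mul]
    intro S sets hsets
    have h1 : (⋂ q ∈ S, (fun z : XSp => (z q : ℝ)) ⁻¹' sets q)
        = {z : XSp | ∀ q ∈ S, (z q : ℝ) ∈ sets q} := by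
      ext z; simp
    rw [h1, hcyl S sets hsets]
    refine Finset.prod_congr rfl fun q hq => ?_
    have h2 := hcyl {q} sets (fun p hp => by
      rw [Finset.mem_singleton] at hp
      subst hp
      exact hsets p hq)
    rw [Finset.prod_singleton] at h2
    have h3 : {z : XSp | ∀ p ∈ ({q} : Finset Nat.Primes), (z p : ℝ) ∈ sets p}
        = (fun z : XSp => (z q : ℝ)) ⁻¹' sets q := by
      ext z; simp
    rw [← h3, h2]
  -- integrability of continuous functions
  have hint : ∀ f : XSp → ℝ, Continuous f → Integrable f μ := by
    intro f hf
    apply hf.integrable_of_hasCompactSupport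
    exact IsCompact.of_isClosed_subset isCompact_univ (isClosed_tsupport f) (Set.subset_univ _)
  have hFint : Integrable F μ := hint F hcont
  have hFInn : 0 ≤ ∫ y, F y ∂μ := integral_nonneg hFnn
  -- main estimate for each η > 0
  have main : ∀ η : ℝ, 0 < η →
      limsup A atTop ≤ (∏ p ∈ PY,
        (μp p (Set.Icc (ω p - δ - η) (ω p + δ + η))).toReal) * ∫ y, F y ∂μ := by
    intro η hη
    set g : ℕ → ℝ → ℝ := fun p t => max 0 (min 1 ((δ + η - |t - ω p|)/η)) with hg
    have hg0le : ∀ p t, 0 ≤ g p t := fun p t => le_max_left _ _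
    have hgle1 : ∀ p t, g p t ≤ 1 := fun p t => max_le zero_le_one (min_le_left _ _)
    have hg1 : ∀ p t, |t - ω p| ≤ δ → g p t = 1 := by
      intro p t ht
      have h1 : (1:ℝ) ≤ (δ + η - |t - ω p|)/η := by
        rw [le_div_iff₀ hη]; linarith
      rw [hg]
      simp only [min_eq_left h1]
      exact max_eq_right zero_le_one
    have hg0 : ∀ p t, δ + η < |t - ω p| → g p t = 0 := by
      intro p t ht
      have h1 : (δ + η - |t - ω p|)/η < 0 := div_neg_of_neg_of_pos (by linarith) hη
      exact max_eq_left (le_of_lt (lt_of_le_of_lt (min_le_right _ _) h1))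
    have hgcont : ∀ p, Continuous (g p) := by
      intro p
      apply continuous_const.max
      apply continuous_const.min
      exact (continuous_const.sub ((continuous_id.sub continuous_const).abs)).div_const η
    set Φ : XSp → ℝ := fun z => ∏ q ∈ S₁, g (q : ℕ) (z q : ℝ) with hΦ
    have hΦcont : Continuous Φ := continuous_finset_prod _ fun q _ =>
      (hgcont _).comp (continuous_subtype_val.comp (continuous_apply q))
    have hΦnn : ∀ z, 0 ≤ Φ z := fun z => Finset.prod_nonneg fun q _ => hg0le _ _
    have hΦle1 : ∀ z, Φ z ≤ 1 := fun z =>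
      Finset.prod_le_one (fun q _ => hg0le _ _) (fun q _ => hgle1 _ _)
    set φ : XSp → ℝ := fun z => Φ z * F z with hφ
    have hφcont : Continuous φ := hΦcont.mul hcont
    have hφnn : ∀ z, 0 ≤ φ z := fun z => mul_nonneg (hΦnn z) (hFnn z)
    have hlim := hequi φ hφcont
    -- step 1 : limsup A ≤ ∫ φ
    have hstep1 : limsup A atTop ≤ ∫ y, φ y ∂μ := by
      have hle : ∀ N, A N ≤ (∑ j ∈ Finset.Icc 1 N, φ (x j)) / N := by
        intro N
        rw [hA]
        refine div_le_div_of_nonneg_right ?_ (Nat.cast_nonneg N)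
        calc ∑ j ∈ (Finset.Icc 1 N).filter (fun j => ∀ (p : ℕ) (hp : p.Prime),
                (p : ℝ) ≤ Y → |(x j ⟨p, hp⟩ : ℝ) - ω p| ≤ δ), F (x j)
            ≤ ∑ j ∈ (Finset.Icc 1 N).filter (fun j => ∀ (p : ℕ) (hp : p.Prime),
                (p : ℝ) ≤ Y → |(x j ⟨p, hp⟩ : ℝ) - ω p| ≤ δ), φ (x j) := by
              refine Finset.sum_le_sum fun j hj => ?_
              rw [Finset.mem_filter] at hj
              have hΦ1 : Φ (x j) = 1 := by
                rw [hΦ]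
                refine Finset.prod_eq_one fun q hq => ?_
                have hqPY : (q : ℕ) ∈ PY := Finset.mem_subtype.mp hq
                rw [hPY, Finset.mem_filter] at hqPY
                refine hg1 _ _ ?_
                exact hj.2 (q : ℕ) q.2 hqPY.2.2
              rw [hφ]
              simp only [hΦ1, one_mul]
              exact le_refl _
          _ ≤ ∑ j ∈ Finset.Icc 1 N, φ (x j) :=
              Finset.sum_le_sum_of_subset_of_nonneg (Finset.filter_subset _ _)
                (fun j _ _ => hφnn _)
      calc limsup A atTop
          ≤ limsup (fun N : ℕ => (∑ j ∈ Finset.Icc 1 N, φ (x j)) / N) atTop := by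
            refine limsup_le_limsup (Eventually.of_forall hle) ?_ ?_
            · exact isCoboundedUnder_le_of_le atTop (x := 0) hAnn
            · exact hlim.isBoundedUnder_le
        _ = ∫ y, φ y ∂μ := hlim.limsup_eq
    -- step 2 : independence and factorization
    have hΦint : Integrable Φ μ := hint Φ hΦcont
    have hindep : ProbabilityTheory.IndepFun Φ F μ := by
      have h12 := hiid.indepFun_finset S₁ S₂ hdisj hev_meas
      set h₁ : ({ q // q ∈ S₁ } → ℝ) → ℝ := fun y => ∏ i ∈ S₁.attach, g ((i : Nat.Primes) : ℕ) (y i)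
        with hh₁
      set ext₂ : ({ q // q ∈ S₂ } → ℝ) → XSp := fun y q =>
        if hq : q ∈ S₂ then Set.projIcc _ _ (neg_le_self (np_nonneg (q : ℕ))) (y ⟨q, hq⟩)
        else ⟨0, Set.mem_Icc.2 ⟨neg_nonpos.2 (np_nonneg _), np_nonneg _⟩⟩ with hext₂
      set h₂ : ({ q // q ∈ S₂ } → ℝ) → ℝ := fun y => F (ext₂ y) with hh₂
      have hext₂cont : Continuous ext₂ := by
        refine continuous_pi fun q => ?_
        by_cases hq : q ∈ S₂
        · simp only [hext₂, dif_pos hq]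
          exact continuous_projIcc.comp (continuous_apply _)
        · simp only [hext₂, dif_neg hq]
          exact continuous_const
      have hh₁meas : Measurable h₁ := by
        refine Finset.measurable_prod _ fun i _ => ?_
        exact ((hgcont _).comp (continuous_apply _)).measurable
      have hh₂meas : Measurable h₂ := (hcont.comp hext₂cont).measurable
      have hcomp := h12.comp hh₁meas hh₂meas
      have e1 : Φ = h₁ ∘ (fun (z : XSp) (i : { q // q ∈ S₁ }) => ((z i.1 : ℝ))) := by
        funext z
        rw [hΦ, hh₁]
        simp only [Function.comp_apply]
        rw [← Finset.prod_attach S₁ (fun q => g (q : ℕ) (z q : ℝ))]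
      have e2 : F = h₂ ∘ (fun (z : XSp) (i : { q // q ∈ S₂ }) => ((z i.1 : ℝ))) := by
        funext z
        simp only [Function.comp_apply, hh₂]
        refine (Ffun_congr fun p hp h1 h2 => ?_).symm
        have hmem : (⟨p, hp⟩ : Nat.Primes) ∈ S₂ := by
          refine Finset.mem_subtype.mpr ?_
          show p ∈ Pfin
          rw [hPfin, Finset.mem_filter]
          have hple : p ≤ ⌊X₁⌋₊ := Nat.le_floor h2
          exact ⟨Finset.mem_range.2 (by omega), hp, h1, h2⟩
        rw [hext₂]
        simp only [dif_pos hmem]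
        rw [Set.projIcc_of_mem _ (Set.mem_Icc.2 ⟨(z ⟨p, hp⟩).2.1, (z ⟨p, hp⟩).2.2⟩)]
        exact dif_pos hmem
      rw [e1, e2]
      exact hcomp
    have hmul : ∫ y, φ y ∂μ = (∫ y, Φ y ∂μ) * ∫ y, F y ∂μ :=
      hindep.integral_mul_eq_mul_integral hΦint.aestronglyMeasurable hFint.aestronglyMeasurable
    -- step 3 : ∫ Φ ≤ measure of cylinder
    have hstep3 : ∫ y, Φ y ∂μ
        ≤ ∏ p ∈ PY, (μp p (Set.Icc (ω p - δ - η) (ω p + δ + η))).toReal := by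
      set E : Set XSp :=
        {z | ∀ q ∈ S₁, (z q : ℝ) ∈ Set.Icc (ω (q : ℕ) - δ - η) (ω (q : ℕ) + δ + η)} with hE
      have hEmeas : MeasurableSet E := by
        have : E = ⋂ q ∈ S₁, (fun z : XSp => (z q : ℝ)) ⁻¹'
            Set.Icc (ω (q : ℕ) - δ - η) (ω (q : ℕ) + δ + η) := by
          ext z; simp [hE]
        rw [this]
        exact Finset.measurableSet_biInter _ fun q _ => (hev_meas q) measurableSet_Icc
      have hΦleind : ∀ z, Φ z ≤ E.indicator (fun _ => (1:ℝ)) z := by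
        intro z
        by_cases hz : z ∈ E
        · rw [Set.indicator_of_mem hz]; exact hΦle1 z
        · rw [Set.indicator_of_notMem hz]
          rw [hE, Set.mem_setOf_eq] at hz
          push_neg at hz
          obtain ⟨q, hq, hqIcc⟩ := hz
          rw [Set.mem_Icc, not_and_or] at hqIcc
          have hzero : g (q : ℕ) (z q : ℝ) = 0 := by
            refine hg0 _ _ ?_
            rcases hqIcc with h | h
            · push_neg at h
              calc δ + η < ω (q : ℕ) - (z q : ℝ) := by linarith
                _ ≤ |(z q : ℝ) - ω (q : ℕ)| := by rw [abs_sub_comm]; exact le_abs_self _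
            · push_neg at h
              calc δ + η < (z q : ℝ) - ω (q : ℕ) := by linarith
                _ ≤ |(z q : ℝ) - ω (q : ℕ)| := le_abs_self _
          rw [hΦ]
          exact le_of_eq (Finset.prod_eq_zero hq hzero)
      have hμE : μ E = ∏ q ∈ S₁, μp (q : ℕ) (Set.Icc (ω (q : ℕ) - δ - η) (ω (q : ℕ) + δ + η)) :=
        hcyl S₁ (fun q => Set.Icc (ω (q : ℕ) - δ - η) (ω (q : ℕ) + δ + η))
          (fun q _ => measurableSet_Icc)
      have h1 : ∫ y, Φ y ∂μ ≤ ∫ y, E.indicator (fun _ => (1:ℝ)) y ∂μ :=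
        integral_mono hΦint ((integrable_const (1:ℝ)).indicator hEmeas) hΦleind
      have h2 : ∫ y, E.indicator (fun _ => (1:ℝ)) y ∂μ = (μ E).toReal :=
        integral_indicator_one hEmeas
      have h3 : (μ E).toReal
          = ∏ q ∈ S₁, (μp (q : ℕ) (Set.Icc (ω (q : ℕ) - δ - η) (ω (q : ℕ) + δ + η))).toReal := by
        rw [hμE, ENNReal.toReal_prod]
      have h4 : ∏ q ∈ S₁, (μp (q : ℕ) (Set.Icc (ω (q : ℕ) - δ - η) (ω (q : ℕ) + δ + η))).toReal
          = ∏ p ∈ PY, (μp p (Set.Icc (ω p - δ - η) (ω p + δ + η))).toReal := by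
        rw [hS₁]
        have hPYsub : ∀ p ∈ PY, p.Prime := by
          intro p hp; rw [hPY, Finset.mem_filter] at hp; exact hp.2.1
        conv_rhs => rw [← Finset.subtype_map_of_mem hPYsub]
        rw [Finset.prod_map]
        rfl
      rw [h2, h3, h4] at h1
      exact h1
    calc limsup A atTop ≤ ∫ y, φ y ∂μ := hstep1
      _ = (∫ y, Φ y ∂μ) * ∫ y, F y ∂μ := hmul
      _ ≤ _ := mul_le_mul_of_nonneg_right hstep3 hFInn
  -- pass to the limit η → 0
  have htend : Tendsto (fun n : ℕ => (∏ p ∈ PY,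
      (μp p (Set.Icc (ω p - δ - 1/(n+1)) (ω p + δ + 1/(n+1)))).toReal) * ∫ y, F y ∂μ) atTop
      (𝓝 ((∏ p ∈ PY, (μp p (Set.Icc (ω p - δ) (ω p + δ))).toReal) * ∫ y, F y ∂μ)) := by
    apply Tendsto.mul_const
    apply tendsto_finset_prod
    intro p hp
    have hprime : p.Prime := by rw [hPY, Finset.mem_filter] at hp; exact hp.2.1
    haveI := hμp_prob ⟨p, hprime⟩
    have hmeas : Tendsto (fun n : ℕ => μp p (Set.Icc (ω p - δ - 1/(n+1)) (ω p + δ + 1/(n+1))))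
        atTop (𝓝 (μp p (Set.Icc (ω p - δ) (ω p + δ)))) := by
      have hInt : ⋂ n : ℕ, Set.Icc (ω p - δ - 1/((n:ℝ)+1)) (ω p + δ + 1/((n:ℝ)+1))
          = Set.Icc (ω p - δ) (ω p + δ) := by
        ext t
        simp only [Set.mem_iInter, Set.mem_Icc]
        constructor
        · intro h
          constructor
          · by_contra hlt
            push_neg at hlt
            obtain ⟨n, hn⟩ := exists_nat_one_div_lt (show (0:ℝ) < (ω p - δ) - t by linarith)
            have := (h n).1
            linarith
          · by_contra hlt
            push_neg at hlt
            obtain ⟨n, hn⟩ := exists_nat_one_div_lt (show (0:ℝ) < t - (ω p + δ) by linarith)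
            have := (h n).2
            linarith
        · intro h n
          have h1 : (0:ℝ) < 1/((n:ℝ)+1) := by positivity
          exact ⟨by linarith [h.1], by linarith [h.2]⟩
      have hanti : Antitone (fun n : ℕ =>
          Set.Icc (ω p - δ - 1/((n:ℝ)+1)) (ω p + δ + 1/((n:ℝ)+1))) := by
        intro n m hnm
        have h1 : 1/((m:ℝ)+1) ≤ 1/((n:ℝ)+1) := by
          apply one_div_le_one_div_of_le
          · positivity
          · exact_mod_cast by omega
        exact Set.Icc_subset_Icc (by linarith) (by linarith)
      have := tendsto_measure_iInter_atTop (μ := μp p)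
        (fun n => measurableSet_Icc.nullMeasurableSet) hanti ⟨0, measure_ne_top _ _⟩
      rwa [hInt] at this
    exact (ENNReal.tendsto_toReal (measure_ne_top _ _)).comp hmeas
  exact ge_of_tendsto' htend fun n => main (1/((n:ℝ)+1)) (by positivity)
end

section
/- For every prime p, the measure μ_p is a probability measure; that is, ∫_{−2}^{2} (1/(2π)) · (1+p) · √(4 − x²)/((p^{1/2} + p^{−1/2})² − x²) dx = 1. -/
set_option maxHeartbeats 1000000

open Real

lemma key (a b : ℝ) (hb : 0 < b) (ha : 0 < a) (h : a^2 = b^2 + 4) :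
    ∫ x in (-2:ℝ)..2, Real.sqrt (4 - x^2) / (a^2 - x^2) = π * (1 - b/a) := by
  have hpos : ∀ x ∈ Set.Icc (-2:ℝ) 2, 0 < a^2 - x^2 := by
    intro x hx; nlinarith [hx.1, hx.2]
  set F : ℝ → ℝ := fun x => Real.arcsin (x/2)
      - (b/a) * Real.arcsin (b*x/(2*Real.sqrt (a^2-x^2))) with hFdef
  have hcont : ContinuousOn F (Set.Icc (-2:ℝ) 2) := by
    apply ContinuousOn.sub
    · exact (Real.continuous_arcsin.comp (continuous_id.div_const 2)).continuousOn
    · apply ContinuousOn.mul continuousOn_const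
      apply Real.continuous_arcsin.comp_continuousOn
      apply ContinuousOn.div
      · exact (continuous_const.mul continuous_id).continuousOn
      · exact (continuous_const.mul (Real.continuous_sqrt.comp
          (continuous_const.sub (continuous_pow 2)))).continuousOn
      · intro x hx
        have := hpos x hx
        positivity
  have hderiv : ∀ x ∈ Set.Ioo (-2:ℝ) 2,
      HasDerivAt F (Real.sqrt (4 - x^2) / (a^2 - x^2)) x := by
    intro x hx
    have h4 : 0 < 4 - x^2 := by nlinarith [hx.1, hx.2]
    have hax : 0 < a^2 - x^2 := hpos x (Set.mem_Icc.2 ⟨hx.1.le, hx.2.le⟩)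
    set t := Real.sqrt (4 - x^2) with htdef
    set w := Real.sqrt (a^2 - x^2) with hwdef
    have ht : 0 < t := Real.sqrt_pos.2 h4
    have hw : 0 < w := Real.sqrt_pos.2 hax
    have ht2 : t^2 = 4 - x^2 := Real.sq_sqrt h4.le
    have hw2 : w^2 = a^2 - x^2 := Real.sq_sqrt hax.le
    -- first piece: arcsin (x/2)
    have e1 : Real.sqrt (1 - (x/2)^2) = t/2 := by
      rw [show 1 - (x/2)^2 = (t/2)^2 by rw [div_pow, div_pow, ht2]; ring]
      exact Real.sqrt_sq (by positivity)
    have hx2ne : x/2 ≠ -1 ∧ x/2 ≠ 1 := by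
      constructor <;> intro hc <;> [nlinarith [hx.1]; nlinarith [hx.2]]
    have d1 : HasDerivAt (fun y : ℝ => Real.arcsin (y/2)) (1/t) x := by
      have := (Real.hasDerivAt_arcsin hx2ne.1 hx2ne.2).comp x
        ((hasDerivAt_id x).div_const 2)
      refine this.congr_deriv (Eq.symm ?_)
      rw [e1]
      field_simp
    -- inner function u
    set u : ℝ → ℝ := fun y => b*y/(2*Real.sqrt (a^2-y^2)) with hudef
    have hux : u x = b*x/(2*w) := rfl
    have hu : HasDerivAt u (b*a^2/(2*w^3)) x := by
      have hnum : HasDerivAt (fun y : ℝ => b*y) b x := by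
        simpa using (hasDerivAt_id x).const_mul b
      have hinner : HasDerivAt (fun y : ℝ => a^2 - y^2) (-(2*x)) x := by
        simpa using ((hasDerivAt_pow 2 x).const_sub (a^2))
      have hsq : HasDerivAt (fun y : ℝ => Real.sqrt (a^2-y^2))
          (1/(2*w) * (-(2*x))) x :=
        (Real.hasDerivAt_sqrt hax.ne').comp x hinner
      have hden : HasDerivAt (fun y : ℝ => 2*Real.sqrt (a^2-y^2))
          (2*(1/(2*w) * (-(2*x)))) x := hsq.const_mul 2
      have := hnum.div hden (by positivity)
      refine this.congr_deriv (Eq.symm ?_)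
      field_simp
      rw [← hwdef]
      linear_combination (-w^2) * hw2
    -- 1 - (u x)^2
    have e2 : Real.sqrt (1 - (u x)^2) = a*t/(2*w) := by
      rw [show 1 - (u x)^2 = (a*t/(2*w))^2 by
        rw [hux]; field_simp; nlinarith [ht2, hw2]]
      exact Real.sqrt_sq (by positivity)
    have huxne : u x ≠ -1 ∧ u x ≠ 1 := by
      have h2 : 0 < 1 - (u x)^2 := by
        have : (0:ℝ) < (a*t/(2*w))^2 := by positivity
        calc (0:ℝ) < (a*t/(2*w))^2 := this
        _ = 1 - (u x)^2 := by rw [hux]; field_simp; nlinarith [ht2, hw2]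
      constructor <;> intro hc <;> rw [hc] at h2 <;> norm_num at h2
    have d2 : HasDerivAt (fun y : ℝ => Real.arcsin (u y)) (a*b/(w^2*t)) x := by
      have := (Real.hasDerivAt_arcsin huxne.1 huxne.2).comp x hu
      refine this.congr_deriv (Eq.symm ?_)
      rw [e2]
      field_simp
    have dF : HasDerivAt F (1/t - (b/a) * (a*b/(w^2*t))) x := d1.sub (d2.const_mul (b/a))
    convert dF using 1
    rw [← hw2,
      show (1:ℝ)/t - (b/a)*(a*b/(w^2*t)) = (w^2-b^2)/(w^2*t) by
        field_simp [ht.ne', hw.ne', ha.ne'],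
      show w^2 - b^2 = t^2 by linear_combination hw2 - ht2 + h]
    field_simp [ht.ne', hw.ne']
  have hint : IntervalIntegrable (fun x => Real.sqrt (4 - x^2) / (a^2 - x^2))
      MeasureTheory.volume (-2) 2 := by
    apply ContinuousOn.intervalIntegrable
    rw [Set.uIcc_of_le (by norm_num : (-2:ℝ) ≤ 2)]
    apply ContinuousOn.div
    · exact (Real.continuous_sqrt.comp (continuous_const.sub (continuous_pow 2))).continuousOn
    · exact (continuous_const.sub (continuous_pow 2)).continuousOn
    · intro x hx; exact (hpos x hx).ne'
  rw [intervalIntegral.integral_eq_sub_of_hasDerivAt_of_le (by norm_num) hcont hderiv hint]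
  have hb2 : Real.sqrt (a^2 - 2^2) = b := by
    rw [show a^2 - 2^2 = b^2 by nlinarith]
    exact Real.sqrt_sq hb.le
  have hbm2 : Real.sqrt (a^2 - (-2:ℝ)^2) = b := by
    rw [show a^2 - (-2:ℝ)^2 = b^2 by nlinarith]
    exact Real.sqrt_sq hb.le
  rw [hFdef]
  simp only [hb2, hbm2]
  rw [show b*2/(2*b) = 1 by rw [mul_comm b 2]; field_simp, show b*(-2:ℝ)/(2*b) = -1 by rw [mul_comm b (-2:ℝ)]; field_simp,
    show (2:ℝ)/2 = 1 by norm_num, show (-2:ℝ)/2 = -1 by norm_num,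
    Real.arcsin_one, Real.arcsin_neg_one]
  field_simp
  ring



/-- For every prime `p`, the measure `μ_p` with density
`(1/(2π)) (1+p) √(4-x²)/(n(p)² - x²)` on `[-2,2]` (and zero outside), where
`n(p) = p^{1/2} + p^{-1/2}`, is a probability measure:
`∫_{-2}^{2} (1/(2π)) (1+p) √(4-x²)/(n(p)² - x²) dx = 1`. -/
theorem stmt8 (p : ℕ) (hp : p.Prime) :
    ∫ x in (-2 : ℝ)..2,
      1 / (2 * Real.pi) * (1 + (p : ℝ)) * Real.sqrt (4 - x ^ 2) /
        (((p : ℝ) ^ ((1 : ℝ) / 2) + (p : ℝ) ^ (-(1 : ℝ) / 2)) ^ 2 - x ^ 2) = 1 := by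
  have hp2 : 2 ≤ p := hp.two_le
  have hp0 : (0:ℝ) < p := by positivity
  set s : ℝ := Real.sqrt p with hsdef
  have hs0 : 0 < s := Real.sqrt_pos.2 hp0
  have hs2 : s^2 = p := Real.sq_sqrt hp0.le
  have hs1 : 1 < s := by
    rw [hsdef, show (1:ℝ) = Real.sqrt 1 from Real.sqrt_one.symm]
    exact Real.sqrt_lt_sqrt (by norm_num) (by exact_mod_cast hp.one_lt)
  have hA : (p : ℝ) ^ ((1 : ℝ) / 2) + (p : ℝ) ^ (-(1 : ℝ) / 2) = s + s⁻¹ := by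
    rw [show -(1:ℝ)/2 = -(1/2) by norm_num, Real.rpow_neg hp0.le,
      ← Real.sqrt_eq_rpow]
  rw [hA]
  have hkey := key (s + s⁻¹) (s - s⁻¹) (by
      have : s⁻¹ < 1 := by
        rw [inv_lt_one_iff₀]; right; exact hs1
      linarith) (by positivity) (by field_simp; ring)
  have heq : ∀ x : ℝ,
      1 / (2 * Real.pi) * (1 + (p : ℝ)) * Real.sqrt (4 - x ^ 2) / ((s + s⁻¹) ^ 2 - x ^ 2)
      = (1 / (2 * Real.pi) * (1 + (p : ℝ))) * (Real.sqrt (4 - x ^ 2) / ((s + s⁻¹) ^ 2 - x ^ 2)) := by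
    intro x; ring
  simp_rw [heq]
  rw [intervalIntegral.integral_const_mul, hkey]
  have hπ : Real.pi ≠ 0 := Real.pi_ne_zero
  have h1 : 1 - (s - s⁻¹)/(s + s⁻¹) = 2/((p:ℝ)+1) := by
    rw [← hs2]
    field_simp
    ring
  rw [h1]
  field_simp
  ring
end
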